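/- arXiv:1201.0978 — 3 statements merged into one kernel-verified Lean document; each statement's English description precedes it below -/
import Mathlib

section
/- Let π: Q̃ ↠ Q be a surjective homomorphism of finitely generated groups, A a finitely generated ℤQ-module, and Ã the ℤQ̃-module obtained by pulling back the action along π. If χ̃: Q̃ → ℝ is a nonzero character that does not vanish on ker π, then Ã is finitely generated over the monoid ring ℤQ̃_{χ̃}. -/
def fgOver {Q : Type*} [Group Q] (M : Set Q) (A : Type*) [AddCommGroup A]
    [Module (MonoidAlgebra ℤ Q) A] : Prop :=
  ∃ S : Finset A, AddSubgroup.closure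
    {x : A | ∃ s ∈ S, ∃ q ∈ M, x = (MonoidAlgebra.single q (1:ℤ) : MonoidAlgebra ℤ Q) • s} = ⊤

open Classical in
noncomputable def vchi {Q : Type*} (χ : Q → ℝ) (lam : MonoidAlgebra ℤ Q) : WithTop ℝ :=
  if h : lam = 0 then ⊤
  else ((lam.coeff.support.inf' (Finsupp.support_nonempty_iff.mpr (fun h' => h (MonoidAlgebra.coeff_eq_zero.mp h'))) χ : ℝ) : WithTop ℝ)

theorem stmt5 {Qt Q : Type*} [Group Qt] [Group Q]
    (hQt : Group.FG Qt) (hQ : Group.FG Q)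
    (π : Qt →* Q) (hπ : Function.Surjective π)
    (A : Type*) [AddCommGroup A] [Module (MonoidAlgebra ℤ Q) A]
    [Module.Finite (MonoidAlgebra ℤ Q) A]
    (χt : Qt → ℝ) (hhom : ∀ a b : Qt, χt (a * b) = χt a + χt b) (hne : χt ≠ 0)
    (hker : ∃ t ∈ π.ker, χt t ≠ 0) :
    @fgOver Qt _ {q : Qt | 0 ≤ χt q} A _
      (Module.compHom A (MonoidAlgebra.mapDomainRingHom ℤ π)) := by
  letI inst : Module (MonoidAlgebra ℤ Qt) A :=
    Module.compHom A (MonoidAlgebra.mapDomainRingHom ℤ π)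
  -- basic character facts
  have hone : χt 1 = 0 := by
    have := hhom 1 1; simp at this; linarith
  have hinv : ∀ q : Qt, χt q⁻¹ = -χt q := by
    intro q
    have := hhom q q⁻¹
    simp [hone] at this
    linarith
  have hpow : ∀ (q : Qt) (n : ℕ), χt (q ^ n) = n * χt q := by
    intro q n
    induction n with
    | zero => simp [hone]
    | succ n ih => rw [pow_succ, hhom, ih]; push_cast; ring
  -- find t ∈ ker with χt t > 0
  obtain ⟨t₀, ht₀ker, ht₀ne⟩ := hker
  obtain ⟨t, htker, htpos⟩ : ∃ t, t ∈ π.ker ∧ 0 < χt t := by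
    rcases lt_or_gt_of_ne ht₀ne with h | h
    · exact ⟨t₀⁻¹, inv_mem ht₀ker, by rw [hinv]; linarith⟩
    · exact ⟨t₀, ht₀ker, h⟩
  -- smul in the pulled-back module
  have hsmul : ∀ (q : Qt) (a : A),
      (MonoidAlgebra.single q (1:ℤ) : MonoidAlgebra ℤ Qt) • a
        = (MonoidAlgebra.single (π q) (1:ℤ) : MonoidAlgebra ℤ Q) • a := by
    intro q a
    show (MonoidAlgebra.mapDomainRingHom ℤ π (MonoidAlgebra.single q (1:ℤ))) • a = _
    congr 1
    simp [MonoidAlgebra.mapDomainRingHom_apply, Finsupp.mapDomain_single]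
  obtain ⟨S, hS⟩ := Module.finite_def.mp (inferInstance : Module.Finite (MonoidAlgebra ℤ Q) A)
  refine ⟨S, ?_⟩
  set X : Set A := {x : A | ∃ s ∈ S, ∃ q ∈ {q : Qt | 0 ≤ χt q},
    x = (MonoidAlgebra.single q (1:ℤ) : MonoidAlgebra ℤ Qt) • s} with hX
  -- every single p • s (s ∈ S) is in closure X
  have hmem : ∀ (p : Q) (s : A), s ∈ S →
      (MonoidAlgebra.single p (1:ℤ) : MonoidAlgebra ℤ Q) • s ∈ AddSubgroup.closure X := by
    intro p s hs
    obtain ⟨q, hq⟩ := hπ p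
    obtain ⟨n, hn⟩ := exists_nat_ge ((-χt q) / χt t)
    have hge : 0 ≤ χt (q * t ^ n) := by
      rw [hhom, hpow]
      have := (div_le_iff₀ htpos).mp hn
      linarith
    have hπqt : π (q * t ^ n) = p := by
      have : π t = 1 := htker
      simp [map_mul, map_pow, this, hq]
    have hx : (MonoidAlgebra.single (q * t ^ n) (1:ℤ) : MonoidAlgebra ℤ Qt) • s ∈ X :=
      ⟨s, hs, q * t ^ n, hge, rfl⟩
    have := AddSubgroup.subset_closure hx
    rwa [hsmul, hπqt] at this
  -- closure X is stable under single p 1 • ·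
  have hQsmul : ∀ (p : Q) (a : A), a ∈ AddSubgroup.closure X →
      (MonoidAlgebra.single p (1:ℤ) : MonoidAlgebra ℤ Q) • a ∈ AddSubgroup.closure X := by
    intro p a ha
    induction ha using AddSubgroup.closure_induction with
    | mem x hx =>
      obtain ⟨s, hs, q, _, rfl⟩ := hx
      rw [hsmul, smul_smul, MonoidAlgebra.single_mul_single, one_mul]
      exact hmem _ s hs
    | zero => rw [smul_zero]; exact (AddSubgroup.closure X).zero_mem
    | add x y _ _ hx hy => rw [smul_add]; exact (AddSubgroup.closure X).add_mem hx hy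
    | neg x _ hx => rw [smul_neg]; exact (AddSubgroup.closure X).neg_mem hx
  -- closure X is stable under all of ℤQ
  have hlam : ∀ (lam : MonoidAlgebra ℤ Q) (a : A), a ∈ AddSubgroup.closure X →
      lam • a ∈ AddSubgroup.closure X := by
    intro lam
    induction lam using MonoidAlgebra.induction_linear with
    | zero => intro a _; rw [zero_smul]; exact (AddSubgroup.closure X).zero_mem
    | add f g hf hg =>
      intro a ha
      rw [add_smul]; exact (AddSubgroup.closure X).add_mem (hf a ha) (hg a ha)
    | single p z =>
      intro a ha
      show (MonoidAlgebra.single p z : MonoidAlgebra ℤ Q) • a ∈ AddSubgroup.closure X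
      have h1 : (MonoidAlgebra.single p z : MonoidAlgebra ℤ Q)
          = z • (MonoidAlgebra.single p (1:ℤ)) := by
        rw [MonoidAlgebra.smul_single, smul_eq_mul, mul_one]
      rw [h1, smul_assoc]
      exact AddSubgroup.zsmul_mem _ (hQsmul p a ha) z
  rw [eq_top_iff]
  intro a ha'
  clear ha'
  have haS : a ∈ Submodule.span (MonoidAlgebra ℤ Q) (S : Set A) := hS ▸ Submodule.mem_top
  induction haS using Submodule.span_induction with
  | mem s hs =>
    have := hmem 1 s hs
    rwa [show (MonoidAlgebra.single (1:Q) (1:ℤ) : MonoidAlgebra ℤ Q) = 1 from rfl,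
      one_smul] at this
  | zero => exact (AddSubgroup.closure X).zero_mem
  | add x y _ _ hx hy => exact (AddSubgroup.closure X).add_mem hx hy
  | smul c x _ hx => exact hlam c x hx
end

section
/- Let π: Q̃ ↠ Q be surjective, χ: Q → ℝ nonzero, and χ̃ = χ ∘ π. Then a finitely generated ℤQ-module A is finitely generated over ℤQ_χ if and only if the pulled-back module Ã is finitely generated over ℤQ̃_{χ̃}. -/
theorem stmt6 {Qt Q : Type*} [Group Qt] [Group Q]
    (hQt : Group.FG Qt) (hQ : Group.FG Q)
    (π : Qt →* Q) (hπ : Function.Surjective π)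
    (A : Type*) [AddCommGroup A] [Module (MonoidAlgebra ℤ Q) A]
    [Module.Finite (MonoidAlgebra ℤ Q) A]
    (χ : Q → ℝ) (hhom : ∀ a b : Q, χ (a * b) = χ a + χ b) (hne : χ ≠ 0) :
    fgOver {q : Q | 0 ≤ χ q} A ↔
      @fgOver Qt _ {q : Qt | 0 ≤ χ (π q)} A _
        (Module.compHom A (MonoidAlgebra.mapDomainRingHom ℤ π)) := by
  letI : Module (MonoidAlgebra ℤ Qt) A := Module.compHom A (MonoidAlgebra.mapDomainRingHom ℤ π)
  have hsmul : ∀ (qt : Qt) (s : A),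
      (MonoidAlgebra.single qt (1:ℤ) : MonoidAlgebra ℤ Qt) • s
        = (MonoidAlgebra.single (π qt) (1:ℤ) : MonoidAlgebra ℤ Q) • s := by
    intro qt s
    show (MonoidAlgebra.mapDomainRingHom ℤ π (MonoidAlgebra.single qt (1:ℤ))) • s = _
    rw [show MonoidAlgebra.mapDomainRingHom ℤ π (MonoidAlgebra.single qt (1:ℤ))
        = MonoidAlgebra.single (π qt) (1:ℤ) from MonoidAlgebra.mapDomain_single]
  unfold fgOver
  apply exists_congr; intro S
  have hset : {x : A | ∃ s ∈ S, ∃ q ∈ {q : Q | 0 ≤ χ q},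
        x = (MonoidAlgebra.single q (1:ℤ) : MonoidAlgebra ℤ Q) • s}
      = {x : A | ∃ s ∈ S, ∃ q ∈ {q : Qt | 0 ≤ χ (π q)},
        x = (MonoidAlgebra.single q (1:ℤ) : MonoidAlgebra ℤ Qt) • s} := by
    ext x
    constructor
    · rintro ⟨s, hs, q, hq, rfl⟩
      obtain ⟨qt, rfl⟩ := hπ q
      exact ⟨s, hs, qt, hq, (hsmul qt s).symm⟩
    · rintro ⟨s, hs, qt, hqt, rfl⟩
      exact ⟨s, hs, π qt, hqt, hsmul qt s⟩
  rw [hset]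
end

section
/- If the group ring ℤQ has no zero-divisors, then for every character χ: Q → ℝ and all λ, μ ∈ ℤQ, the naive valuation satisfies v_χ(λ·μ) = v_χ(λ) + v_χ(μ). -/
theorem stmt10 {Q : Type*} [Group Q] [NoZeroDivisors (MonoidAlgebra ℤ Q)]
    (χ : Q → ℝ) (hhom : ∀ a b : Q, χ (a * b) = χ a + χ b)
    (lam mu : MonoidAlgebra ℤ Q) :
    vchi χ (lam * mu) = vchi χ lam + vchi χ mu := by
  classical
  by_cases hl : lam = 0
  · simp [hl, vchi]
  by_cases hm : mu = 0
  · simp [hm, vchi]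
  have hlm : lam * mu ≠ 0 := mul_ne_zero hl hm
  set m : ℝ := lam.coeff.support.inf' (Finsupp.support_nonempty_iff.mpr (fun h' => hl (MonoidAlgebra.coeff_eq_zero.mp h'))) χ with hmdef
  set n : ℝ := mu.coeff.support.inf' (Finsupp.support_nonempty_iff.mpr (fun h' => hm (MonoidAlgebra.coeff_eq_zero.mp h'))) χ with hndef
  have hmle : ∀ a ∈ lam.coeff.support, m ≤ χ a := fun a ha => Finset.inf'_le χ ha
  have hnle : ∀ b ∈ mu.coeff.support, n ≤ χ b := fun b hb => Finset.inf'_le χ hb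
  set lam0 : MonoidAlgebra ℤ Q := MonoidAlgebra.ofCoeff (lam.coeff.filter (fun q => χ q = m)) with hlam0
  set mu0 : MonoidAlgebra ℤ Q := MonoidAlgebra.ofCoeff (mu.coeff.filter (fun q => χ q = n)) with hmu0
  have hlam0app : ∀ a, χ a = m → lam0.coeff a = lam.coeff a := by
    intro a ha; simp [hlam0, MonoidAlgebra.coeff_ofCoeff, Finsupp.filter_apply, ha]
  have hmu0app : ∀ b, χ b = n → mu0.coeff b = mu.coeff b := by
    intro b hb; simp [hmu0, MonoidAlgebra.coeff_ofCoeff, Finsupp.filter_apply, hb]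
  have hlam0ne : lam0 ≠ 0 := by
    obtain ⟨a, ha, hae⟩ :=
      Finset.exists_mem_eq_inf' (Finsupp.support_nonempty_iff.mpr (fun h' => hl (MonoidAlgebra.coeff_eq_zero.mp h'))) χ
    intro h
    have h1 : lam0.coeff a = lam.coeff a := hlam0app a hae.symm
    rw [h, MonoidAlgebra.coeff_zero, Finsupp.zero_apply] at h1
    exact (Finsupp.mem_support_iff.mp ha) h1.symm
  have hmu0ne : mu0 ≠ 0 := by
    obtain ⟨b, hb, hbe⟩ :=
      Finset.exists_mem_eq_inf' (Finsupp.support_nonempty_iff.mpr (fun h' => hm (MonoidAlgebra.coeff_eq_zero.mp h'))) χ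
    intro h
    have h1 : mu0.coeff b = mu.coeff b := hmu0app b hbe.symm
    rw [h, MonoidAlgebra.coeff_zero, Finsupp.zero_apply] at h1
    exact (Finsupp.mem_support_iff.mp hb) h1.symm
  -- membership facts about supports of filters
  have hsupp0 : lam0.coeff.support = lam.coeff.support.filter (fun q => χ q = m) := by
    simp [hlam0, MonoidAlgebra.coeff_ofCoeff, Finsupp.support_filter]
  have hsupp0' : mu0.coeff.support = mu.coeff.support.filter (fun q => χ q = n) := by
    simp [hmu0, MonoidAlgebra.coeff_ofCoeff, Finsupp.support_filter]
  have hprod : lam0 * mu0 ≠ 0 := mul_ne_zero hlam0ne hmu0ne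
  obtain ⟨q, hq⟩ := Finsupp.support_nonempty_iff.mpr (fun h' => hprod (MonoidAlgebra.coeff_eq_zero.mp h'))
  have hqmem := MonoidAlgebra.support_coeff_mul_subset lam0 mu0 hq
  obtain ⟨a, ha, b, hb, rfl⟩ := Finset.mem_mul.mp hqmem
  rw [hsupp0, Finset.mem_filter] at ha
  rw [hsupp0', Finset.mem_filter] at hb
  have hχab : χ (a * b) = m + n := by rw [hhom, ha.2, hb.2]
  -- decomposition
  have hdecomp : lam * mu = lam0 * mu0 + ((lam - lam0) * mu + lam0 * (mu - mu0)) := by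
    noncomm_ring
  have h1 : ((lam - lam0) * mu).coeff (a * b) = 0 := by
    by_contra h
    have hmem := MonoidAlgebra.support_coeff_mul_subset (lam - lam0) mu (Finsupp.mem_support_iff.mpr h)
    obtain ⟨a', ha', b', hb', heq⟩ := Finset.mem_mul.mp hmem
    have ha'ne : χ a' ≠ m := by
      intro hc
      have := Finsupp.mem_support_iff.mp ha'
      rw [MonoidAlgebra.coeff_sub, Finsupp.sub_apply, hlam0app a' hc, sub_self] at this
      exact this rfl
    have ha'mem : a' ∈ lam.coeff.support := by
      have := Finsupp.mem_support_iff.mp ha'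
      rw [MonoidAlgebra.coeff_sub, Finsupp.sub_apply] at this
      by_contra hc
      have h0 : lam.coeff a' = 0 := Finsupp.notMem_support_iff.mp hc
      have h0' : lam0.coeff a' = 0 := by
        have : a' ∉ lam0.coeff.support := by
          rw [hsupp0, Finset.mem_filter]; tauto
        exact Finsupp.notMem_support_iff.mp this
      rw [h0, h0'] at this; simp at this
    have hgt : m < χ a' := lt_of_le_of_ne (hmle a' ha'mem) (Ne.symm ha'ne)
    have : χ (a' * b') = χ a' + χ b' := hhom a' b'
    rw [heq, hχab] at this
    have : m + n < χ a' + χ b' := add_lt_add_of_lt_of_le hgt (hnle b' hb')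
    linarith
  have h2 : (lam0 * (mu - mu0)).coeff (a * b) = 0 := by
    by_contra h
    have hmem := MonoidAlgebra.support_coeff_mul_subset lam0 (mu - mu0) (Finsupp.mem_support_iff.mpr h)
    obtain ⟨a', ha', b', hb', heq⟩ := Finset.mem_mul.mp hmem
    have hb'ne : χ b' ≠ n := by
      intro hc
      have := Finsupp.mem_support_iff.mp hb'
      rw [MonoidAlgebra.coeff_sub, Finsupp.sub_apply, hmu0app b' hc, sub_self] at this
      exact this rfl
    have hb'mem : b' ∈ mu.coeff.support := by
      have := Finsupp.mem_support_iff.mp hb'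
      rw [MonoidAlgebra.coeff_sub, Finsupp.sub_apply] at this
      by_contra hc
      have h0 : mu.coeff b' = 0 := Finsupp.notMem_support_iff.mp hc
      have h0' : mu0.coeff b' = 0 := by
        have : b' ∉ mu0.coeff.support := by
          rw [hsupp0', Finset.mem_filter]; tauto
        exact Finsupp.notMem_support_iff.mp this
      rw [h0, h0'] at this; simp at this
    rw [hsupp0, Finset.mem_filter] at ha'
    have hgt : n < χ b' := lt_of_le_of_ne (hnle b' hb'mem) (Ne.symm hb'ne)
    have heq2 : χ (a' * b') = χ a' + χ b' := hhom a' b'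
    rw [heq, hχab, ha'.2] at heq2
    linarith
  have hval : (lam * mu).coeff (a * b) = (lam0 * mu0).coeff (a * b) := by
    rw [hdecomp]
    rw [MonoidAlgebra.coeff_add, MonoidAlgebra.coeff_add, Finsupp.add_apply, Finsupp.add_apply, h1, h2, add_zero, add_zero]
  have habmem : a * b ∈ (lam * mu).coeff.support := by
    rw [Finsupp.mem_support_iff, hval]
    exact Finsupp.mem_support_iff.mp hq
  -- final computation
  rw [vchi, vchi, vchi, dif_neg hl, dif_neg hm, dif_neg hlm, ← hmdef, ← hndef,
    ← WithTop.coe_add, WithTop.coe_eq_coe]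
  apply le_antisymm
  · calc (lam * mu).coeff.support.inf' (Finsupp.support_nonempty_iff.mpr (fun h' => hlm (MonoidAlgebra.coeff_eq_zero.mp h'))) χ
        ≤ χ (a * b) := Finset.inf'_le χ habmem
      _ = m + n := hχab
  · apply Finset.le_inf'
    intro q hqq
    obtain ⟨x, hx, y, hy, rfl⟩ := Finset.mem_mul.mp (MonoidAlgebra.support_coeff_mul_subset lam mu hqq)
    rw [hhom]
    exact add_le_add (hmle x hx) (hnle y hy)
end
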